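/- Let A, B be alternating sign matrices of size n. Then B covers A in ASM order if and only if there exists a position (r,s) with 1 ≤ r,s ≤ n−1 such that the 2×2 submatrix of B at rows r, r+1 and columns s, s+1 minus the corresponding 2×2 submatrix of A equals [[−1, 1], [1, −1]], and a_{pq} = b_{pq} for all positions (p,q) outside {(r,s),(r,s+1),(r+1,s),(r+1,s+1)}. Moreover, such a position (r,s) is unique. -/

import Mathlib

/-- An alternating sign matrix: entries in {-1,0,1}, partial row/column sums in {0,1},
full row/column sums equal to 1. -/
def IsASM {n : ℕ} (A : Matrix (Fin n) (Fin n) ℤ) : Prop :=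
  (∀ i j, A i j = -1 ∨ A i j = 0 ∨ A i j = 1) ∧
  (∀ i j, (∑ k ∈ Finset.Iic j, A i k) = 0 ∨ (∑ k ∈ Finset.Iic j, A i k) = 1) ∧
  (∀ i j, (∑ k ∈ Finset.Iic i, A k j) = 0 ∨ (∑ k ∈ Finset.Iic i, A k j) = 1) ∧
  (∀ i, (∑ k, A i k) = 1) ∧
  (∀ j, (∑ k, A k j) = 1)

/-- Corner sum matrix. -/
def cornerSum {n : ℕ} (A : Matrix (Fin n) (Fin n) ℤ) (i j : Fin n) : ℤ :=
  ∑ p ∈ Finset.Iic i, ∑ q ∈ Finset.Iic j, A p q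

/-- ASM order: `A ≤ B` iff corner sums of `A` dominate those of `B`. -/
def asmLE {n : ℕ} (A B : Matrix (Fin n) (Fin n) ℤ) : Prop :=
  ∀ i j, cornerSum B i j ≤ cornerSum A i j

def asmLT {n : ℕ} (A B : Matrix (Fin n) (Fin n) ℤ) : Prop :=
  asmLE A B ∧ ¬ asmLE B A

/-- `B` covers `A` in the poset of ASMs of size `n`. -/
def asmCovers {n : ℕ} (A B : Matrix (Fin n) (Fin n) ℤ) : Prop :=
  asmLT A B ∧ ∀ C : Matrix (Fin n) (Fin n) ℤ, IsASM C → asmLT A C → ¬ asmLT C B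

/-- `A` is join-irreducible: it covers exactly one element of the ASM poset. -/
def JoinIrred {n : ℕ} (A : Matrix (Fin n) (Fin n) ℤ) : Prop :=
  IsASM A ∧ ∃! C : Matrix (Fin n) (Fin n) ℤ, IsASM C ∧ asmCovers C A

/-- `β B` = number of join-irreducible ASMs weakly below `B`. -/
noncomputable def asmBeta {n : ℕ} (B : Matrix (Fin n) (Fin n) ℤ) : ℕ :=
  Set.ncard {A : Matrix (Fin n) (Fin n) ℤ | JoinIrred A ∧ asmLE A B}

open Finset Matrix

section Aux
variable {n : ℕ}

lemma sum_Iic_fin (f : Fin n → ℤ) (g : ℕ → ℤ) (hfg : ∀ k : Fin n, f k = g k.1) (j : Fin n) :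
    ∑ k ∈ Finset.Iic j, f k = ∑ q ∈ Finset.range (j.1+1), g q := by
  have h1 : Finset.Iic (j.1) = Finset.range (j.1+1) := by ext x; simp [Nat.lt_succ_iff]
  rw [← h1, ← Fin.map_valEmbedding_Iic, Finset.sum_map]
  exact Finset.sum_congr rfl fun k _ => hfg k

lemma sum_univ_fin (f : Fin n → ℤ) (g : ℕ → ℤ) (hfg : ∀ k : Fin n, f k = g k.1) :
    ∑ k : Fin n, f k = ∑ q ∈ Finset.range n, g q := by
  rw [← Fin.sum_univ_eq_sum_range g n]
  exact Finset.sum_congr rfl fun k _ => hfg k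

def extM (A : Matrix (Fin n) (Fin n) ℤ) (i j : ℕ) : ℤ :=
  if h : i < n ∧ j < n then A ⟨i, h.1⟩ ⟨j, h.2⟩ else 0

lemma extM_eq (A : Matrix (Fin n) (Fin n) ℤ) (p q : Fin n) : extM A p.1 q.1 = A p q := by
  simp [extM, p.2, q.2]

lemma extM_zero {A : Matrix (Fin n) (Fin n) ℤ} {i j : ℕ} (h : n ≤ i ∨ n ≤ j) :
    extM A i j = 0 := by
  unfold extM
  rw [dif_neg]
  omega

def FF (A : Matrix (Fin n) (Fin n) ℤ) (i j : ℕ) : ℤ :=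
  ∑ p ∈ Finset.range i, ∑ q ∈ Finset.range j, extM A p q

lemma FF_succ_left (A : Matrix (Fin n) (Fin n) ℤ) (i j : ℕ) :
    FF A (i+1) j = FF A i j + ∑ q ∈ Finset.range j, extM A i q :=
  Finset.sum_range_succ _ _

lemma FF_entry (A : Matrix (Fin n) (Fin n) ℤ) (p q : Fin n) :
    A p q = FF A (p.1+1) (q.1+1) - FF A p.1 (q.1+1) - FF A (p.1+1) q.1 + FF A p.1 q.1 := by
  rw [FF_succ_left, FF_succ_left, Finset.sum_range_succ, extM_eq]
  ring

end Aux

section Aux2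
variable {n : ℕ}

lemma isASM_transpose {A : Matrix (Fin n) (Fin n) ℤ} (hA : IsASM A) : IsASM Aᵀ :=
  ⟨fun i j => hA.1 j i, fun i j => hA.2.2.1 j i, fun i j => hA.2.1 j i,
   hA.2.2.2.2, hA.2.2.2.1⟩

lemma extM_transpose (A : Matrix (Fin n) (Fin n) ℤ) (i j : ℕ) :
    extM Aᵀ i j = extM A j i := by
  unfold extM
  by_cases h : i < n ∧ j < n
  · rw [dif_pos h, dif_pos ⟨h.2, h.1⟩]; rfl
  · rw [dif_neg h, dif_neg (fun h' => h ⟨h'.2, h'.1⟩)]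

lemma FF_transpose (A : Matrix (Fin n) (Fin n) ℤ) (i j : ℕ) :
    FF Aᵀ i j = FF A j i := by
  unfold FF
  rw [Finset.sum_comm]
  exact Finset.sum_congr rfl fun p _ => Finset.sum_congr rfl fun q _ => extM_transpose A q p

lemma RR_stable (A : Matrix (Fin n) (Fin n) ℤ) {i j : ℕ} (hj : n ≤ j) :
    ∑ q ∈ Finset.range j, extM A i q = ∑ q ∈ Finset.range n, extM A i q := by
  refine (Finset.sum_subset (Finset.range_subset_range.2 hj) ?_).symm
  intro x _ hx
  exact extM_zero (Or.inr (by simpa using hx))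

lemma RR_full {A : Matrix (Fin n) (Fin n) ℤ} (hA : IsASM A) {i j : ℕ} (hi : i < n) (hj : n ≤ j) :
    ∑ q ∈ Finset.range j, extM A i q = 1 := by
  rw [RR_stable A hj,
    ← sum_univ_fin (A ⟨i, hi⟩) (extM A i) (fun k => (extM_eq A ⟨i, hi⟩ k).symm)]
  exact hA.2.2.2.1 _

lemma RR_mem {A : Matrix (Fin n) (Fin n) ℤ} (hA : IsASM A) {i : ℕ} (hi : i < n) (j : ℕ) :
    (∑ q ∈ Finset.range j, extM A i q) = 0 ∨ (∑ q ∈ Finset.range j, extM A i q) = 1 := by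
  rcases Nat.eq_zero_or_pos j with rfl | hj
  · left; simp
  rcases le_or_gt j n with hjn | hjn
  · have h1 : j - 1 < n := by omega
    have h2 : j - 1 + 1 = j := by omega
    have h3 : ∑ k ∈ Finset.Iic (⟨j-1, h1⟩ : Fin n), A ⟨i, hi⟩ k
        = ∑ q ∈ Finset.range j, extM A i q := by
      rw [sum_Iic_fin (A ⟨i, hi⟩) (extM A i) (fun k => (extM_eq A ⟨i, hi⟩ k).symm)]
      rw [h2]
    rw [← h3]
    exact hA.2.1 _ _
  · right; exact RR_full hA hi hjn.le

lemma FF_row_zero (A : Matrix (Fin n) (Fin n) ℤ) (j : ℕ) : FF A 0 j = 0 := by simp [FF]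

lemma FF_col_zero (A : Matrix (Fin n) (Fin n) ℤ) (i : ℕ) : FF A i 0 = 0 := by simp [FF]

lemma FF_step_row {A : Matrix (Fin n) (Fin n) ℤ} (hA : IsASM A) {i : ℕ} (hi : i < n) (j : ℕ) :
    FF A (i+1) j - FF A i j = 0 ∨ FF A (i+1) j - FF A i j = 1 := by
  rw [FF_succ_left]
  simpa using RR_mem hA hi j

lemma FF_step_col {A : Matrix (Fin n) (Fin n) ℤ} (hA : IsASM A) (i : ℕ) {j : ℕ} (hj : j < n) :
    FF A i (j+1) - FF A i j = 0 ∨ FF A i (j+1) - FF A i j = 1 := by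
  rw [← FF_transpose A (j+1) i, ← FF_transpose A j i]
  exact FF_step_row (isASM_transpose hA) hj i

lemma FF_row_n {A : Matrix (Fin n) (Fin n) ℤ} (hA : IsASM A) {i : ℕ} (hi : i ≤ n) :
    FF A i n = i := by
  induction i with
  | zero => simp [FF_row_zero]
  | succ k ih =>
    rw [FF_succ_left, ih (by omega), RR_full hA (by omega) le_rfl]
    push_cast; ring

lemma FF_col_n {A : Matrix (Fin n) (Fin n) ℤ} (hA : IsASM A) {j : ℕ} (hj : j ≤ n) :
    FF A n j = j := by
  rw [← FF_transpose]
  exact FF_row_n (isASM_transpose hA) hj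

lemma cornerSum_eq_FF (A : Matrix (Fin n) (Fin n) ℤ) (i j : Fin n) :
    cornerSum A i j = FF A (i.1+1) (j.1+1) := by
  unfold cornerSum FF
  exact sum_Iic_fin _ (fun p => ∑ q ∈ Finset.range (j.1+1), extM A p q)
    (fun p => sum_Iic_fin (A p) (extM A p.1) (fun k => (extM_eq A p k).symm) j) i

end Aux2

section Recon
variable {n : ℕ} (g : ℕ → ℕ → ℤ)

def recon : Matrix (Fin n) (Fin n) ℤ :=
  fun p q => g (p.1+1) (q.1+1) - g p.1 (q.1+1) - g (p.1+1) q.1 + g p.1 q.1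

lemma recon_row (hg0c : ∀ i, g i 0 = 0) (p q : Fin n) :
    ∑ k ∈ Finset.Iic q, (recon g : Matrix (Fin n) (Fin n) ℤ) p k
      = g (p.1+1) (q.1+1) - g p.1 (q.1+1) := by
  rw [sum_Iic_fin (fun k => recon g p k)
    (fun t => (g (p.1+1) (t+1) - g p.1 (t+1)) - (g (p.1+1) t - g p.1 t))
    (fun k => by simp only [recon]; ring) q]
  rw [Finset.sum_range_sub (fun t => g (p.1+1) t - g p.1 t)]
  rw [hg0c, hg0c]
  ring

lemma recon_col (hg0r : ∀ j, g 0 j = 0) (p q : Fin n) :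
    ∑ k ∈ Finset.Iic p, (recon g : Matrix (Fin n) (Fin n) ℤ) k q
      = g (p.1+1) (q.1+1) - g (p.1+1) q.1 := by
  rw [sum_Iic_fin (fun k => recon g k q)
    (fun t => (g (t+1) (q.1+1) - g (t+1) q.1) - (g t (q.1+1) - g t q.1))
    (fun k => by simp only [recon]; ring) p]
  rw [Finset.sum_range_sub (fun t => g t (q.1+1) - g t q.1)]
  rw [hg0r, hg0r]
  ring

lemma recon_isASM (hg0r : ∀ j, g 0 j = 0) (hg0c : ∀ i, g i 0 = 0)
    (hgr : ∀ i j, i < n → j ≤ n → g (i+1) j - g i j = 0 ∨ g (i+1) j - g i j = 1)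
    (hgc : ∀ i j, i ≤ n → j < n → g i (j+1) - g i j = 0 ∨ g i (j+1) - g i j = 1)
    (hgrn : ∀ i, i ≤ n → g i n = i) (hgcn : ∀ j, j ≤ n → g n j = j) : IsASM (recon g : Matrix (Fin n) (Fin n) ℤ) := by
  refine ⟨?_, ?_, ?_, ?_, ?_⟩
  · intro p q
    have h1 := hgr p.1 (q.1+1) p.2 q.2
    have h2 := hgr p.1 q.1 p.2 (le_of_lt q.2)
    simp only [recon]
    omega
  · intro p q
    rw [recon_row g hg0c p q]
    exact hgr p.1 (q.1+1) p.2 q.2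
  · intro p q
    rw [recon_col g hg0r p q]
    exact hgc (p.1+1) q.1 p.2 q.2
  · intro p
    have : ∑ k : Fin n, (recon g : Matrix (Fin n) (Fin n) ℤ) p k
        = g (p.1+1) n - g p.1 n := by
      rw [sum_univ_fin (fun k => recon g p k)
        (fun t => (g (p.1+1) (t+1) - g p.1 (t+1)) - (g (p.1+1) t - g p.1 t))
        (fun k => by simp only [recon]; ring)]
      rw [Finset.sum_range_sub (fun t => g (p.1+1) t - g p.1 t)]
      rw [hg0c, hg0c]; ring
    rw [this, hgrn _ p.2, hgrn _ (le_of_lt p.2)]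
    push_cast; ring
  · intro q
    have : ∑ k : Fin n, (recon g : Matrix (Fin n) (Fin n) ℤ) k q
        = g n (q.1+1) - g n q.1 := by
      rw [sum_univ_fin (fun k => recon g k q)
        (fun t => (g (t+1) (q.1+1) - g (t+1) q.1) - (g t (q.1+1) - g t q.1))
        (fun k => by simp only [recon]; ring)]
      rw [Finset.sum_range_sub (fun t => g t (q.1+1) - g t q.1)]
      rw [hg0r, hg0r]; ring
    rw [this, hgcn _ q.2, hgcn _ (le_of_lt q.2)]
    push_cast; ring

lemma recon_corner (hg0r : ∀ j, g 0 j = 0) (hg0c : ∀ i, g i 0 = 0) (i j : Fin n) :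
    cornerSum (recon g : Matrix (Fin n) (Fin n) ℤ) i j = g (i.1+1) (j.1+1) := by
  unfold cornerSum
  rw [sum_Iic_fin (fun p => ∑ q ∈ Finset.Iic j, (recon g : Matrix (Fin n) (Fin n) ℤ) p q)
    (fun t => g (t+1) (j.1+1) - g t (j.1+1)) ?_ i]
  · rw [Finset.sum_range_sub (fun t => g t (j.1+1)), hg0r]; ring
  · intro p
    exact recon_row g hg0c p j

end Recon

section PointSum
variable {n : ℕ}

lemma sum_point (i j u v : Fin n) (c : ℤ) :
    (∑ p ∈ Finset.Iic i, ∑ q ∈ Finset.Iic j, (if p = u ∧ q = v then c else 0))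
      = if u ≤ i ∧ v ≤ j then c else 0 := by
  have inner : ∀ p : Fin n, (∑ q ∈ Finset.Iic j, (if p = u ∧ q = v then c else 0))
      = if p = u then (if v ≤ j then c else 0) else 0 := by
    intro p
    by_cases hp : p = u
    · simp [hp, Finset.sum_ite_eq', Finset.mem_Iic]
    · simp [hp]
  rw [Finset.sum_congr rfl (fun p _ => inner p)]
  simp [Finset.sum_ite_eq', Finset.mem_Iic, ite_and]

end PointSum

section Backward
variable {n : ℕ}

lemma corner_diff (A B : Matrix (Fin n) (Fin n) ℤ) (r s : Fin n)
    (hr : (r : ℕ) + 1 < n) (hs : (s : ℕ) + 1 < n)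
    (e1 : B r s - A r s = -1)
    (e2 : B r ⟨s + 1, hs⟩ - A r ⟨s + 1, hs⟩ = 1)
    (e3 : B ⟨r + 1, hr⟩ s - A ⟨r + 1, hr⟩ s = 1)
    (e4 : B ⟨r + 1, hr⟩ ⟨s + 1, hs⟩ - A ⟨r + 1, hr⟩ ⟨s + 1, hs⟩ = -1)
    (hout : ∀ p' q' : Fin n,
      ¬ ((p' = r ∨ p' = ⟨r + 1, hr⟩) ∧ (q' = s ∨ q' = ⟨s + 1, hs⟩)) → A p' q' = B p' q') :
    ∀ i j : Fin n, cornerSum B i j = cornerSum A i j + (if i = r ∧ j = s then -1 else 0) := by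
  intro i j
  set r1 : Fin n := ⟨r + 1, hr⟩
  set s1 : Fin n := ⟨s + 1, hs⟩
  have hDpt : ∀ p q : Fin n, B p q - A p q =
      (if p = r ∧ q = s then (-1 : ℤ) else 0) + (if p = r ∧ q = s1 then 1 else 0)
      + (if p = r1 ∧ q = s then 1 else 0) + (if p = r1 ∧ q = s1 then -1 else 0) := by
    intro p q
    have hrr1 : r ≠ r1 := by
      intro h; have := congrArg Fin.val h; simp [r1] at this
    have hss1 : s ≠ s1 := by
      intro h; have := congrArg Fin.val h; simp [s1] at this
    by_cases hblock : (p = r ∨ p = r1) ∧ (q = s ∨ q = s1)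
    · rcases hblock with ⟨hp | hp, hq | hq⟩ <;> subst hp <;> subst hq <;>
        simp [hrr1, hss1, hrr1.symm, hss1.symm, e1, e2, e3, e4]
    · have h0 := hout p q hblock
      have hc : ∀ (c1 : Prop) [Decidable c1], ((p = r ∨ p = r1) ∧ (q = s ∨ q = s1) → ¬ c1) →
          (if c1 then (0:ℤ) else 0) = 0 := by intro c1 _ _; simp
      push_neg at hblock
      split_ifs <;> omega
  have hsum : cornerSum B i j - cornerSum A i j
      = ∑ p ∈ Finset.Iic i, ∑ q ∈ Finset.Iic j, (B p q - A p q) := by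
    unfold cornerSum
    rw [← Finset.sum_sub_distrib]
    exact Finset.sum_congr rfl fun p _ => (Finset.sum_sub_distrib _ _).symm
  rw [Finset.sum_congr rfl (fun p _ => Finset.sum_congr rfl fun q _ => hDpt p q)] at hsum
  simp only [Finset.sum_add_distrib] at hsum
  rw [sum_point i j r s (-1), sum_point i j r s1 1, sum_point i j r1 s 1,
    sum_point i j r1 s1 (-1)] at hsum
  have key : (if r ≤ i ∧ s ≤ j then (-1:ℤ) else 0) + (if r ≤ i ∧ s1 ≤ j then 1 else 0)
      + (if r1 ≤ i ∧ s ≤ j then 1 else 0) + (if r1 ≤ i ∧ s1 ≤ j then -1 else 0)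
      = if i = r ∧ j = s then -1 else 0 := by
    simp only [Fin.le_def, Fin.ext_iff, r1, s1]
    split_ifs <;> omega
  rw [key] at hsum
  omega

end Backward

section Forward
variable {n : ℕ}

lemma grid_le {A B : Matrix (Fin n) (Fin n) ℤ} (hA : IsASM A) (hB : IsASM B)
    (hle : asmLE A B) : ∀ u v, u ≤ n → v ≤ n → FF B u v ≤ FF A u v := by
  intro u v hu hv
  rcases Nat.eq_zero_or_pos u with rfl | hu0
  · rw [FF_row_zero, FF_row_zero]
  rcases Nat.eq_zero_or_pos v with rfl | hv0
  · rw [FF_col_zero, FF_col_zero]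
  rcases eq_or_lt_of_le hu with rfl | hu1
  · rw [FF_col_n hB hv, FF_col_n hA hv]
  rcases eq_or_lt_of_le hv with rfl | hv1
  · rw [FF_row_n hB (le_of_lt hu1), FF_row_n hA (le_of_lt hu1)]
  have h := hle ⟨u-1, by omega⟩ ⟨v-1, by omega⟩
  rw [cornerSum_eq_FF, cornerSum_eq_FF] at h
  have h' : FF B (u-1+1) (v-1+1) ≤ FF A (u-1+1) (v-1+1) := h
  have e1 : u - 1 + 1 = u := by omega
  have e2 : v - 1 + 1 = v := by omega
  rw [e1, e2] at h'
  exact h'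

lemma forward_core {A B : Matrix (Fin n) (Fin n) ℤ} (hA : IsASM A) (hB : IsASM B)
    (hcov : asmCovers A B) :
    ∃ i' j' : ℕ, i' + 2 ≤ n ∧ j' + 2 ≤ n ∧
      ∀ u v, u ≤ n → v ≤ n →
        FF B u v - FF A u v = if u = i'+1 ∧ v = j'+1 then -1 else 0 := by
  obtain ⟨⟨hle, hnle⟩, hmin⟩ := hcov
  have hgrid := grid_le hA hB hle
  set S : Finset (ℕ × ℕ) :=
    (Finset.range (n+1) ×ˢ Finset.range (n+1)).filter
      (fun x => FF B x.1 x.2 < FF A x.1 x.2) with hSdef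
  have memS : ∀ u v : ℕ, u ≤ n → v ≤ n → FF B u v < FF A u v → (u, v) ∈ S := by
    intro u v hu hv h
    simp only [hSdef, Finset.mem_filter, Finset.mem_product, Finset.mem_range]
    exact ⟨⟨by omega, by omega⟩, h⟩
  have hSne : S.Nonempty := by
    simp only [asmLE, not_forall, not_le] at hnle
    obtain ⟨i0, j0, h0⟩ := hnle
    rw [cornerSum_eq_FF, cornerSum_eq_FF] at h0
    exact ⟨(i0.1+1, j0.1+1), memS _ _ (by omega) (by omega) h0⟩
  obtain ⟨x, hxS, hmax⟩ := Finset.exists_max_image S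
    (fun x => (2*(n:ℤ)+4) * FF A x.1 x.2 - ((x.1 : ℤ) + (x.2 : ℤ))) hSne
  simp only [hSdef, Finset.mem_filter, Finset.mem_product, Finset.mem_range] at hxS
  obtain ⟨⟨hin, hjn⟩, hab⟩ := hxS
  have hi0 : x.1 ≠ 0 := by
    intro h; rw [h, FF_row_zero, FF_row_zero] at hab; omega
  have hj0 : x.2 ≠ 0 := by
    intro h; rw [h, FF_col_zero, FF_col_zero] at hab; omega
  have hin' : x.1 ≠ n := by
    intro h; rw [h, FF_col_n hA (by omega), FF_col_n hB (by omega)] at hab; omega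
  have hjn' : x.2 ≠ n := by
    intro h; rw [h, FF_row_n hA (by omega), FF_row_n hB (by omega)] at hab; omega
  obtain ⟨i', hi'⟩ : ∃ i', x.1 = i' + 1 := ⟨x.1 - 1, by omega⟩
  obtain ⟨j', hj'⟩ : ∃ j', x.2 = j' + 1 := ⟨x.2 - 1, by omega⟩
  have hi2 : i' + 1 + 1 ≤ n := by omega
  have hj2 : j' + 1 + 1 ≤ n := by omega
  rw [hi', hj'] at hab
  have hkey : ∀ u v : ℕ, (u, v) ∈ S →
      (2*(n:ℤ)+4) * FF A u v - ((u : ℤ) + v)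
        ≤ (2*(n:ℤ)+4) * FF A (i'+1) (j'+1) - ((i' : ℤ) + 1 + ((j' : ℤ) + 1)) := by
    intro u v hmem
    have h := hmax (u, v) hmem
    rw [hi', hj'] at h
    push_cast at h ⊢
    linarith
  -- claims
  have c1 : FF A (i'+1+1) (j'+1) = FF A (i'+1) (j'+1) := by
    by_contra hne
    have h1 := FF_step_row hA (show i'+1 < n by omega) (j'+1)
    have h1' : FF A (i'+1+1) (j'+1) = FF A (i'+1) (j'+1) + 1 := by omega
    have h2 := FF_step_row hB (show i'+1 < n by omega) (j'+1)
    have hmem : (i'+1+1, j'+1) ∈ S := memS _ _ (by omega) (by omega) (by omega)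
    have h3 := hkey _ _ hmem
    rw [h1'] at h3
    push_cast at h3
    nlinarith [h3]
  have c2 : FF A (i'+1) (j'+1+1) = FF A (i'+1) (j'+1) := by
    by_contra hne
    have h1 := FF_step_col hA (i'+1) (show j'+1 < n by omega)
    have h1' : FF A (i'+1) (j'+1+1) = FF A (i'+1) (j'+1) + 1 := by omega
    have h2 := FF_step_col hB (i'+1) (show j'+1 < n by omega)
    have hmem : (i'+1, j'+1+1) ∈ S := memS _ _ (by omega) (by omega) (by omega)
    have h3 := hkey _ _ hmem
    rw [h1'] at h3
    push_cast at h3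
    nlinarith [h3]
  have c3 : FF A (i'+1) (j'+1) = FF A i' (j'+1) + 1 := by
    by_contra hne
    have h1 := FF_step_row hA (show i' < n by omega) (j'+1)
    have h1' : FF A (i'+1) (j'+1) = FF A i' (j'+1) := by omega
    have h2 := FF_step_row hB (show i' < n by omega) (j'+1)
    have hmem : (i', j'+1) ∈ S := memS _ _ (by omega) (by omega) (by omega)
    have h3 := hkey _ _ hmem
    rw [h1'] at h3
    push_cast at h3
    linarith
  have c4 : FF A (i'+1) (j'+1) = FF A (i'+1) j' + 1 := by
    by_contra hne
    have h1 := FF_step_col hA (i'+1) (show j' < n by omega)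
    have h1' : FF A (i'+1) (j'+1) = FF A (i'+1) j' := by omega
    have h2 := FF_step_col hB (i'+1) (show j' < n by omega)
    have hmem : (i'+1, j') ∈ S := memS _ _ (by omega) (by omega) (by omega)
    have h3 := hkey _ _ hmem
    rw [h1'] at h3
    push_cast at h3
    linarith
  -- the intermediate height function
  set g : ℕ → ℕ → ℤ :=
    fun u v => if u = i'+1 ∧ v = j'+1 then FF A (i'+1) (j'+1) - 1 else FF A u v with hgdef
  have gval : ∀ u v : ℕ,
      g u v = if u = i'+1 ∧ v = j'+1 then FF A (i'+1) (j'+1) - 1 else FF A u v :=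
    fun _ _ => rfl
  have hg0r : ∀ v, g 0 v = 0 := by
    intro v
    rw [gval, if_neg (by omega : ¬(0 = i'+1 ∧ v = j'+1))]
    exact FF_row_zero A v
  have hg0c : ∀ u, g u 0 = 0 := by
    intro u
    rw [gval, if_neg (by omega : ¬(u = i'+1 ∧ 0 = j'+1))]
    exact FF_col_zero A u
  have hgrn : ∀ u, u ≤ n → g u n = u := by
    intro u hu
    rw [gval, if_neg (by omega : ¬(u = i'+1 ∧ n = j'+1))]
    exact FF_row_n hA hu
  have hgcn : ∀ v, v ≤ n → g n v = v := by
    intro v hv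
    rw [gval, if_neg (by omega : ¬(n = i'+1 ∧ v = j'+1))]
    exact FF_col_n hA hv
  have hgr : ∀ u v, u < n → v ≤ n → g (u+1) v - g u v = 0 ∨ g (u+1) v - g u v = 1 := by
    intro u v hu hv
    simp only [gval]
    by_cases h2 : u = i'+1 ∧ v = j'+1
    · obtain ⟨rfl, rfl⟩ := h2
      rw [if_neg (by omega : ¬(i'+1+1 = i'+1 ∧ j'+1 = j'+1)), if_pos ⟨rfl, rfl⟩]
      omega
    · rw [if_neg h2]
      by_cases h1 : u + 1 = i'+1 ∧ v = j'+1
      · obtain ⟨he, rfl⟩ := h1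
        have hu' : u = i' := by omega
        subst hu'
        rw [if_pos ⟨rfl, rfl⟩]
        omega
      · rw [if_neg h1]
        exact FF_step_row hA hu v
  have hgc : ∀ u v, u ≤ n → v < n → g u (v+1) - g u v = 0 ∨ g u (v+1) - g u v = 1 := by
    intro u v hu hv
    simp only [gval]
    by_cases h2 : u = i'+1 ∧ v = j'+1
    · obtain ⟨rfl, rfl⟩ := h2
      rw [if_neg (by omega : ¬(i'+1 = i'+1 ∧ j'+1+1 = j'+1)), if_pos ⟨rfl, rfl⟩]
      omega
    · rw [if_neg h2]
      by_cases h1 : u = i'+1 ∧ v + 1 = j'+1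
      · obtain ⟨rfl, he⟩ := h1
        have hv' : v = j' := by omega
        subst hv'
        rw [if_pos ⟨rfl, rfl⟩]
        omega
      · rw [if_neg h1]
        exact FF_step_col hA u hv
  have hC : IsASM (recon g : Matrix (Fin n) (Fin n) ℤ) :=
    recon_isASM g hg0r hg0c hgr hgc hgrn hgcn
  have hCc : ∀ p q : Fin n, cornerSum (recon g : Matrix (Fin n) (Fin n) ℤ) p q
      = g (p.1+1) (q.1+1) := recon_corner g hg0r hg0c
  have hga : ∀ u v : ℕ, g u v ≤ FF A u v := by
    intro u v
    rw [gval]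
    by_cases h : u = i'+1 ∧ v = j'+1
    · rw [if_pos h]
      obtain ⟨rfl, rfl⟩ := h
      omega
    · rw [if_neg h]
  have hbg : ∀ u v : ℕ, u ≤ n → v ≤ n → FF B u v ≤ g u v := by
    intro u v hu hv
    rw [gval]
    by_cases h : u = i'+1 ∧ v = j'+1
    · rw [if_pos h]
      obtain ⟨rfl, rfl⟩ := h
      omega
    · rw [if_neg h]
      exact hgrid u v hu hv
  have hAC : asmLT A (recon g : Matrix (Fin n) (Fin n) ℤ) := by
    constructor
    · intro p q
      rw [hCc, cornerSum_eq_FF]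
      exact hga _ _
    · intro hcon
      have h := hcon (⟨i', by omega⟩ : Fin n) (⟨j', by omega⟩ : Fin n)
      rw [hCc, cornerSum_eq_FF] at h
      have h' : FF A (i'+1) (j'+1) ≤ g (i'+1) (j'+1) := h
      rw [gval, if_pos ⟨rfl, rfl⟩] at h'
      omega
  have hCB : asmLE (recon g : Matrix (Fin n) (Fin n) ℤ) B := by
    intro p q
    rw [hCc, cornerSum_eq_FF]
    exact hbg _ _ (by omega) (by omega)
  have hBC : asmLE B (recon g : Matrix (Fin n) (Fin n) ℤ) := by
    by_contra hcon
    exact hmin (recon g) hC hAC ⟨hCB, hcon⟩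
  have hgb : ∀ u v : ℕ, u ≤ n → v ≤ n → g u v = FF B u v := by
    intro u v hu hv
    have h1 : FF B u v ≤ g u v := hbg u v hu hv
    rcases Nat.eq_zero_or_pos u with rfl | hu0
    · rw [hg0r, FF_row_zero]
    rcases Nat.eq_zero_or_pos v with rfl | hv0
    · rw [hg0c, FF_col_zero]
    rcases eq_or_lt_of_le hu with rfl | hu1
    · rw [hgcn _ hv, FF_col_n hB hv]
    rcases eq_or_lt_of_le hv with rfl | hv1
    · rw [hgrn _ (le_of_lt hu1), FF_row_n hB (le_of_lt hu1)]
    have h2 := hBC (⟨u-1, by omega⟩ : Fin n) (⟨v-1, by omega⟩ : Fin n)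
    rw [hCc, cornerSum_eq_FF] at h2
    have h2' : g (u-1+1) (v-1+1) ≤ FF B (u-1+1) (v-1+1) := h2
    have e1 : u - 1 + 1 = u := by omega
    have e2 : v - 1 + 1 = v := by omega
    rw [e1, e2] at h2'
    omega
  refine ⟨i', j', by omega, by omega, ?_⟩
  intro u v hu hv
  have h := hgb u v hu hv
  rw [gval] at h
  by_cases hcase : u = i'+1 ∧ v = j'+1
  · rw [if_pos hcase] at h
    rw [if_pos hcase]
    obtain ⟨rfl, rfl⟩ := hcase
    omega
  · rw [if_neg hcase] at h
    rw [if_neg hcase]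
    omega

end Forward

theorem asmCovers_iff_exchange {n : ℕ} (A B : Matrix (Fin n) (Fin n) ℤ)
    (hA : IsASM A) (hB : IsASM B) :
    asmCovers A B ↔
      ∃! p : Fin n × Fin n, ∃ (hr : (p.1 : ℕ) + 1 < n) (hs : (p.2 : ℕ) + 1 < n),
        B p.1 p.2 - A p.1 p.2 = -1 ∧
        B p.1 ⟨p.2 + 1, hs⟩ - A p.1 ⟨p.2 + 1, hs⟩ = 1 ∧
        B ⟨p.1 + 1, hr⟩ p.2 - A ⟨p.1 + 1, hr⟩ p.2 = 1 ∧
        B ⟨p.1 + 1, hr⟩ ⟨p.2 + 1, hs⟩ - A ⟨p.1 + 1, hr⟩ ⟨p.2 + 1, hs⟩ = -1 ∧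
        ∀ p' q' : Fin n,
          ¬ ((p' = p.1 ∨ p' = ⟨p.1 + 1, hr⟩) ∧ (q' = p.2 ∨ q' = ⟨p.2 + 1, hs⟩)) →
            A p' q' = B p' q' := by
  constructor
  · intro hcov
    obtain ⟨i', j', hi2, hj2, hd⟩ := forward_core hA hB hcov
    have hED : ∀ p q : Fin n, B p q - A p q
        = (FF B (p.1+1) (q.1+1) - FF A (p.1+1) (q.1+1))
          - (FF B p.1 (q.1+1) - FF A p.1 (q.1+1))
          - (FF B (p.1+1) q.1 - FF A (p.1+1) q.1)
          + (FF B p.1 q.1 - FF A p.1 q.1) := by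
      intro p q
      have h1 := FF_entry A p q
      have h2 := FF_entry B p q
      omega
    have d11 : FF B (i'+1) (j'+1) - FF A (i'+1) (j'+1) = -1 := by
      rw [hd (i'+1) (j'+1) (by omega) (by omega), if_pos ⟨rfl, rfl⟩]
    have dz : ∀ u v : ℕ, u ≤ n → v ≤ n → ¬(u = i'+1 ∧ v = j'+1) →
        FF B u v - FF A u v = 0 := by
      intro u v hu hv h
      rw [hd u v hu hv, if_neg h]
    have hiF : i' < n := by omega
    have hjF : j' < n := by omega
    have hiF2 : i' + 1 < n := by omega
    have hjF2 : j' + 1 < n := by omega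
    have d01 : FF B i' (j'+1) - FF A i' (j'+1) = 0 :=
      dz _ _ (by omega) (by omega) (by omega)
    have d10 : FF B (i'+1) j' - FF A (i'+1) j' = 0 :=
      dz _ _ (by omega) (by omega) (by omega)
    have d00 : FF B i' j' - FF A i' j' = 0 :=
      dz _ _ (by omega) (by omega) (by omega)
    have d21 : FF B (i'+1+1) (j'+1) - FF A (i'+1+1) (j'+1) = 0 :=
      dz _ _ (by omega) (by omega) (by omega)
    have d12 : FF B (i'+1) (j'+1+1) - FF A (i'+1) (j'+1+1) = 0 :=
      dz _ _ (by omega) (by omega) (by omega)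
    have d22 : FF B (i'+1+1) (j'+1+1) - FF A (i'+1+1) (j'+1+1) = 0 :=
      dz _ _ (by omega) (by omega) (by omega)
    have d02 : FF B i' (j'+1+1) - FF A i' (j'+1+1) = 0 :=
      dz _ _ (by omega) (by omega) (by omega)
    have d20 : FF B (i'+1+1) j' - FF A (i'+1+1) j' = 0 :=
      dz _ _ (by omega) (by omega) (by omega)
    have e1 : B ⟨i', hiF⟩ ⟨j', hjF⟩ - A ⟨i', hiF⟩ ⟨j', hjF⟩ = -1 := by
      rw [hED]; simp only [Fin.val_mk]; omega
    have e2 : B ⟨i', hiF⟩ ⟨j'+1, hjF2⟩ - A ⟨i', hiF⟩ ⟨j'+1, hjF2⟩ = 1 := by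
      rw [hED]; simp only [Fin.val_mk]; omega
    have e3 : B ⟨i'+1, hiF2⟩ ⟨j', hjF⟩ - A ⟨i'+1, hiF2⟩ ⟨j', hjF⟩ = 1 := by
      rw [hED]; simp only [Fin.val_mk]; omega
    have e4 : B ⟨i'+1, hiF2⟩ ⟨j'+1, hjF2⟩ - A ⟨i'+1, hiF2⟩ ⟨j'+1, hjF2⟩ = -1 := by
      rw [hED]; simp only [Fin.val_mk]; omega
    refine ⟨(⟨i', hiF⟩, ⟨j', hjF⟩), ⟨hiF2, hjF2, e1, e2, e3, e4, ?_⟩, ?_⟩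
    · intro p' q' hout
      have hp' : p'.1 < n := p'.2
      have hq' : q'.1 < n := q'.2
      have hnp : ¬((p'.1 = i' ∨ p'.1 = i'+1) ∧ (q'.1 = j' ∨ q'.1 = j'+1)) := by
        intro hc
        apply hout
        constructor
        · rcases hc.1 with h | h
          · exact Or.inl (Fin.ext h)
          · exact Or.inr (Fin.ext h)
        · rcases hc.2 with h | h
          · exact Or.inl (Fin.ext h)
          · exact Or.inr (Fin.ext h)
      have z1 : FF B (p'.1+1) (q'.1+1) - FF A (p'.1+1) (q'.1+1) = 0 :=
        dz _ _ (by omega) (by omega) (by omega)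
      have z2 : FF B p'.1 (q'.1+1) - FF A p'.1 (q'.1+1) = 0 :=
        dz _ _ (by omega) (by omega) (by omega)
      have z3 : FF B (p'.1+1) q'.1 - FF A (p'.1+1) q'.1 = 0 :=
        dz _ _ (by omega) (by omega) (by omega)
      have z4 : FF B p'.1 q'.1 - FF A p'.1 q'.1 = 0 :=
        dz _ _ (by omega) (by omega) (by omega)
      have h := hED p' q'
      omega
    · rintro ⟨y1, y2⟩ ⟨hr', hs', f1, f2, f3, f4, fout⟩
      have m1 : ((⟨i', hiF⟩ : Fin n) = y1 ∨ (⟨i', hiF⟩ : Fin n) = ⟨y1.1+1, hr'⟩)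
          ∧ ((⟨j', hjF⟩ : Fin n) = y2 ∨ (⟨j', hjF⟩ : Fin n) = ⟨y2.1+1, hs'⟩) := by
        by_contra hc
        have h := fout _ _ hc
        omega
      have m2 : ((⟨i'+1, hiF2⟩ : Fin n) = y1 ∨ (⟨i'+1, hiF2⟩ : Fin n) = ⟨y1.1+1, hr'⟩)
          ∧ ((⟨j'+1, hjF2⟩ : Fin n) = y2 ∨ (⟨j'+1, hjF2⟩ : Fin n) = ⟨y2.1+1, hs'⟩) := by
        by_contra hc
        have h := fout _ _ hc
        omega
      simp only [Prod.mk.injEq, Fin.ext_iff, Fin.val_mk] at m1 m2 ⊢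
      omega
  · rintro ⟨⟨r, s⟩, ⟨hr, hs, e1, e2, e3, e4, hout⟩, -⟩
    have hcd := corner_diff A B r s hr hs e1 e2 e3 e4 hout
    refine ⟨⟨?_, ?_⟩, ?_⟩
    · intro i j
      rw [hcd i j]
      split_ifs <;> omega
    · intro hcon
      have h := hcon r s
      rw [hcd r s, if_pos ⟨rfl, rfl⟩] at h
      omega
    · rintro C hC ⟨hAC1, hAC2⟩ ⟨hCB1, hCB2⟩
      simp only [asmLE, not_forall, not_le] at hCB2
      obtain ⟨i0, j0, h0⟩ := hCB2
      by_cases hpt : i0 = r ∧ j0 = s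
      · apply hAC2
        intro i j
        by_cases hij : i = r ∧ j = s
        · have h1 := hcd i j
          rw [if_pos hij] at h1
          have h0' : cornerSum B i j < cornerSum C i j := by
            rw [hij.1, hij.2, ← hpt.1, ← hpt.2]; exact h0
          omega
        · have h1 := hCB1 i j
          have h2 := hcd i j
          rw [if_neg hij] at h2
          omega
      · have h1 := hAC1 i0 j0
        have h2 := hcd i0 j0
        rw [if_neg hpt] at h2
        omega
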